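/- For all integers k, n₁, n₂, n₃, n₄ with 2 ≤ k ≤ n₁ + n₂, the complete 4-partite graph K_{n₁,n₂,n₃,n₄} has a subgraph with (n₁+n₂+n₃)n₄ + (k−1)n₃ edges containing no k pairwise vertex-disjoint triangles. -/

import Mathlib

open Finset

section Aux

lemma card_filter_sigma {ι : Type*} [Fintype ι] [DecidableEq ι] {κ : ι → Type*}
    [∀ i, Fintype (κ i)] (P : (Σ i, κ i) → Prop) [DecidablePred P] :
    (univ.filter P).card = ∑ i, (univ.filter fun j => P ⟨i, j⟩).card := by
  rw [← Finset.card_sigma]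
  congr 1
  ext ⟨i, j⟩
  simp [Finset.mem_sigma]

lemma card_filter_fin_lt (n m : ℕ) :
    ((univ : Finset (Fin n)).filter fun j : Fin n => (j : ℕ) < m).card = min m n := by
  rw [← Fintype.card_subtype]
  have e : {j : Fin n // (j : ℕ) < m} ≃ Fin (min m n) :=
    { toFun := fun j => ⟨j.1.1, by have := j.1.2; have := j.2; omega⟩
      invFun := fun v => ⟨⟨v.1, lt_of_lt_of_le v.2 (min_le_right _ _)⟩,
        lt_of_lt_of_le v.2 (min_le_left _ _)⟩
      left_inv := fun j => by ext; rfl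
      right_inv := fun v => rfl }
  rw [Fintype.card_congr e, Fintype.card_fin]

lemma card_filter_fin_add_lt (n c m : ℕ) :
    ((univ : Finset (Fin n)).filter fun j : Fin n => (j : ℕ) + c < m).card = min (m - c) n := by
  rw [Finset.filter_congr (fun x _ => by constructor <;> (intro; omega) :
    ∀ x ∈ (univ : Finset (Fin n)), ((x : ℕ) + c < m ↔ (x : ℕ) < m - c))]
  exact card_filter_fin_lt n (m - c)

end Aux

namespace TuranKL

variable (k n₁ n₂ n₃ n₄ : ℕ)

abbrev Vx := Σ i : Fin 4, Fin (![n₁, n₂, n₃, n₄] i)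

def sel (v : Vx n₁ n₂ n₃ n₄) : Prop :=
  (v.1 = 0 ∧ (v.2 : ℕ) < k - 1) ∨ (v.1 = 1 ∧ (v.2 : ℕ) + n₁ < k - 1)

instance : DecidablePred (sel k n₁ n₂ n₃ n₄) := fun v => by unfold sel; infer_instance

lemma sel_fst {v : Vx n₁ n₂ n₃ n₄} (h : sel k n₁ n₂ n₃ n₄ v) : v.1 = 0 ∨ v.1 = 1 :=
  h.imp And.left And.left

def Hg : SimpleGraph (Vx n₁ n₂ n₃ n₄) where
  Adj u v := u.1 ≠ v.1 ∧ (u.1 = 3 ∨ v.1 = 3 ∨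
    (u.1 = 2 ∧ sel k n₁ n₂ n₃ n₄ v) ∨ (v.1 = 2 ∧ sel k n₁ n₂ n₃ n₄ u))
  symm := ⟨fun u v h => ⟨Ne.symm h.1, by tauto⟩⟩
  loopless := ⟨fun v h => h.1 rfl⟩

lemma hg_adj {u v : Vx n₁ n₂ n₃ n₄} : (Hg k n₁ n₂ n₃ n₄).Adj u v ↔
    u.1 ≠ v.1 ∧ (u.1 = 3 ∨ v.1 = 3 ∨
    (u.1 = 2 ∧ sel k n₁ n₂ n₃ n₄ v) ∨ (v.1 = 2 ∧ sel k n₁ n₂ n₃ n₄ u)) := Iff.rfl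

lemma vx_ext {u v : Vx n₁ n₂ n₃ n₄} (h1 : u.1 = v.1) (h2 : (u.2 : ℕ) = (v.2 : ℕ)) : u = v := by
  obtain ⟨i, a⟩ := u; obtain ⟨j, b⟩ := v
  dsimp at h1 h2
  subst h1
  exact congrArg _ (Fin.ext h2)

lemma sel_inj {u v : Vx n₁ n₂ n₃ n₄} (hu : sel k n₁ n₂ n₃ n₄ u) (hv : sel k n₁ n₂ n₃ n₄ v)
    (h : (if u.1 = 0 then (u.2 : ℕ) else (u.2 : ℕ) + n₁)
       = (if v.1 = 0 then (v.2 : ℕ) else (v.2 : ℕ) + n₁)) : u = v := by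
  have hult : (u.1 = 0) → (u.2 : ℕ) < n₁ := by
    intro h0
    have h1 := u.2.isLt
    have h2 : ![n₁, n₂, n₃, n₄] u.1 = n₁ := by rw [h0]; rfl
    omega
  have hvlt : (v.1 = 0) → (v.2 : ℕ) < n₁ := by
    intro h0
    have h1 := v.2.isLt
    have h2 : ![n₁, n₂, n₃, n₄] v.1 = n₁ := by rw [h0]; rfl
    omega
  rcases hu with ⟨hu0, _⟩ | ⟨hu1, _⟩ <;> rcases hv with ⟨hv0, _⟩ | ⟨hv1, _⟩
  · rw [if_pos hu0, if_pos hv0] at h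
    exact vx_ext n₁ n₂ n₃ n₄ (hu0.trans hv0.symm) h
  · rw [if_pos hu0, if_neg (by rw [hv1]; decide)] at h
    have := hult hu0; omega
  · rw [if_neg (by rw [hu1]; decide), if_pos hv0] at h
    have := hvlt hv0; omega
  · rw [if_neg (by rw [hu1]; decide), if_neg (by rw [hv1]; decide)] at h
    exact vx_ext n₁ n₂ n₃ n₄ (hu1.trans hv1.symm) (by omega)

lemma sel_of_adj {u v : Vx n₁ n₂ n₃ n₄} (h : (Hg k n₁ n₂ n₃ n₄).Adj u v)
    (hu : u.1 ≠ 3) (hv : v.1 ≠ 3) : sel k n₁ n₂ n₃ n₄ u ∨ sel k n₁ n₂ n₃ n₄ v := by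
  rcases h.2 with h3 | h3 | h3 | h3
  · exact absurd h3 hu
  · exact absurd h3 hv
  · exact Or.inr h3.2
  · exact Or.inl h3.2

end TuranKL

/-- `G` contains `k` pairwise vertex-disjoint triangles (a copy of `kK₃`). -/
def HasKDisjointTriangles {V : Type*} (G : SimpleGraph V) (k : ℕ) : Prop :=
  ∃ t : Fin k → Finset V,
    (∀ i, (t i).card = 3 ∧ ((t i : Set V)).Pairwise G.Adj) ∧
    Pairwise (Function.onFun Disjoint t)

namespace TuranKL

variable (k n₁ n₂ n₃ n₄ : ℕ)

lemma no_k_triangles (hk : 2 ≤ k) :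
    ¬ HasKDisjointTriangles (Hg k n₁ n₂ n₃ n₄) k := by
  rintro ⟨t, ht, hd⟩
  have hsel : ∀ i, ∃ x, x ∈ t i ∧ sel k n₁ n₂ n₃ n₄ x := by
    intro i
    obtain ⟨hcard, hp⟩ := ht i
    obtain ⟨a, b, c, hab, hac, hbc, habc⟩ := Finset.card_eq_three.mp hcard
    have ha : a ∈ t i := by rw [habc]; simp
    have hb : b ∈ t i := by rw [habc]; simp
    have hc : c ∈ t i := by rw [habc]; simp
    have hAab : (Hg k n₁ n₂ n₃ n₄).Adj a b := hp (by exact_mod_cast ha) (by exact_mod_cast hb) hab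
    have hAac : (Hg k n₁ n₂ n₃ n₄).Adj a c := hp (by exact_mod_cast ha) (by exact_mod_cast hc) hac
    have hAbc : (Hg k n₁ n₂ n₃ n₄).Adj b c := hp (by exact_mod_cast hb) (by exact_mod_cast hc) hbc
    by_cases h3a : a.1 = 3
    · have h3b : b.1 ≠ 3 := fun h => hAab.1 (h3a.trans h.symm)
      have h3c : c.1 ≠ 3 := fun h => hAac.1 (h3a.trans h.symm)
      rcases sel_of_adj k n₁ n₂ n₃ n₄ hAbc h3b h3c with h | h
      · exact ⟨b, hb, h⟩
      · exact ⟨c, hc, h⟩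
    · by_cases h3b : b.1 = 3
      · have h3c : c.1 ≠ 3 := fun h => hAbc.1 (h3b.trans h.symm)
        rcases sel_of_adj k n₁ n₂ n₃ n₄ hAac h3a h3c with h | h
        · exact ⟨a, ha, h⟩
        · exact ⟨c, hc, h⟩
      · rcases sel_of_adj k n₁ n₂ n₃ n₄ hAab h3a h3b with h | h
        · exact ⟨a, ha, h⟩
        · exact ⟨b, hb, h⟩
  choose f hf hfs using hsel
  have hfinj : Function.Injective f := by
    intro i j hij
    by_contra hne
    have hdisj : Disjoint (t i) (t j) := hd hne
    exact Finset.disjoint_left.mp hdisj (hf i) (hij ▸ hf j)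
  have hFlt : ∀ i, (if (f i).1 = 0 then ((f i).2 : ℕ) else ((f i).2 : ℕ) + n₁) < k - 1 := by
    intro i
    rcases hfs i with ⟨h0, hlt⟩ | ⟨h1, hlt⟩
    · rw [if_pos h0]; exact hlt
    · rw [if_neg (by rw [h1]; decide)]; exact hlt
  set F : Fin k → Fin (k - 1) := fun i =>
    ⟨if (f i).1 = 0 then ((f i).2 : ℕ) else ((f i).2 : ℕ) + n₁, hFlt i⟩ with hF
  have hFinj : Function.Injective F := fun i j hij =>
    hfinj (sel_inj k n₁ n₂ n₃ n₄ (hfs i) (hfs j) (congrArg Fin.val hij))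
  have := Fintype.card_le_of_injective F hFinj
  simp only [Fintype.card_fin] at this
  omega

lemma card_edges (hk : 2 ≤ k) (hkn : k ≤ n₁ + n₂) :
    (Hg k n₁ n₂ n₃ n₄).edgeSet.ncard = (n₁ + n₂ + n₃) * n₄ + (k - 1) * n₃ := by
  classical
  set A : Finset (Vx n₁ n₂ n₃ n₄ × Vx n₁ n₂ n₃ n₄) :=
    (univ ×ˢ univ).filter fun p => p.1.1 ≠ 3 ∧ p.2.1 = 3 with hAdef
  set B : Finset (Vx n₁ n₂ n₃ n₄ × Vx n₁ n₂ n₃ n₄) :=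
    (univ ×ˢ univ).filter fun p => p.1.1 = 2 ∧ sel k n₁ n₂ n₃ n₄ p.2 with hBdef
  have memA : ∀ p, p ∈ A ↔ p.1.1 ≠ 3 ∧ p.2.1 = 3 := by intro p; simp [hAdef]
  have memB : ∀ p, p ∈ B ↔ p.1.1 = 2 ∧ sel k n₁ n₂ n₃ n₄ p.2 := by intro p; simp [hBdef]
  have adjAB : ∀ p ∈ A ∪ B, (Hg k n₁ n₂ n₃ n₄).Adj p.1 p.2 := by
    intro p hp
    rcases Finset.mem_union.mp hp with h | h
    · obtain ⟨h1, h2⟩ := (memA p).mp h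
      exact ⟨fun he => h1 (he.trans h2), Or.inr (Or.inl h2)⟩
    · obtain ⟨h1, h2⟩ := (memB p).mp h
      refine ⟨fun he => ?_, Or.inr (Or.inr (Or.inl ⟨h1, h2⟩))⟩
      rcases sel_fst k n₁ n₂ n₃ n₄ h2 with h3 | h3 <;> rw [h1, h3] at he <;>
        exact absurd he (by decide)
  have key : (Hg k n₁ n₂ n₃ n₄).edgeSet = ↑((A ∪ B).image fun p => s(p.1, p.2)) := by
    ext e
    induction e using Sym2.ind with
    | _ u v =>
      simp only [SimpleGraph.mem_edgeSet, Finset.coe_image, Set.mem_image, Finset.mem_coe]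
      constructor
      · rintro ⟨hne, hcase⟩
        rcases hcase with h3 | h3 | h3 | h3
        · exact ⟨(v, u), Finset.mem_union_left _ ((memA _).mpr
            ⟨fun hv => hne (h3.trans hv.symm), h3⟩), Sym2.eq_swap⟩
        · exact ⟨(u, v), Finset.mem_union_left _ ((memA _).mpr
            ⟨fun hu => hne (hu.trans h3.symm), h3⟩), rfl⟩
        · exact ⟨(u, v), Finset.mem_union_right _ ((memB _).mpr h3), rfl⟩
        · exact ⟨(v, u), Finset.mem_union_right _ ((memB _).mpr h3), Sym2.eq_swap⟩
      · rintro ⟨p, hp, hpe⟩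
        have hadj := adjAB p hp
        rcases Sym2.eq_iff.mp hpe with ⟨h1, h2⟩ | ⟨h1, h2⟩
        · rw [← h1, ← h2]; exact hadj
        · rw [← h1, ← h2]; exact hadj.symm
  have injAB : Set.InjOn (fun p : Vx n₁ n₂ n₃ n₄ × Vx n₁ n₂ n₃ n₄ => s(p.1, p.2)) ↑(A ∪ B) := by
    intro p hp q hq h
    simp only [Finset.coe_union, Set.mem_union, Finset.mem_coe] at hp hq
    rcases Sym2.eq_iff.mp h with ⟨h1, h2⟩ | ⟨h1, h2⟩
    · exact Prod.ext h1 h2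
    · exfalso
      rcases hp with hp | hp <;> rcases hq with hq | hq
      · exact ((memA q).mp hq).1 (h2 ▸ ((memA p).mp hp).2)
      · have e1 : p.2.1 = 3 := ((memA p).mp hp).2
        have e2 : q.1.1 = 2 := ((memB q).mp hq).1
        rw [h2, e2] at e1; exact absurd e1 (by decide)
      · have e1 : p.1.1 = 2 := ((memB p).mp hp).1
        have e2 : q.2.1 = 3 := ((memA q).mp hq).2
        rw [h1, e2] at e1; exact absurd e1 (by decide)
      · have e1 : q.1.1 = 2 := ((memB q).mp hq).1
        have e2 := sel_fst k n₁ n₂ n₃ n₄ ((memB p).mp hp).2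
        rw [h2, e1] at e2
        rcases e2 with e2 | e2 <;> exact absurd e2 (by decide)
  have hdisj : Disjoint A B := by
    rw [Finset.disjoint_left]
    intro p hp hq
    have h1 := ((memA p).mp hp).2
    have h2 := sel_fst k n₁ n₂ n₃ n₄ ((memB p).mp hq).2
    rcases h2 with h2 | h2 <;> rw [h1] at h2 <;> exact absurd h2 (by decide)
  have c1 : ((univ : Finset (Vx n₁ n₂ n₃ n₄)).filter fun u => u.1 ≠ 3).card = n₁ + n₂ + n₃ := by
    rw [card_filter_sigma, Fin.sum_univ_four]
    simp
    erw [Finset.card_univ, Finset.card_univ, Finset.card_univ, Fintype.card_fin, Fintype.card_fin, Fintype.card_fin, Finset.card_empty]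
    rfl
  have c2 : ((univ : Finset (Vx n₁ n₂ n₃ n₄)).filter fun v => v.1 = 3).card = n₄ := by
    rw [card_filter_sigma, Fin.sum_univ_four]
    simp
    erw [Finset.card_univ, Fintype.card_fin, Finset.card_empty]
    simp
  have c3 : ((univ : Finset (Vx n₁ n₂ n₃ n₄)).filter fun u => u.1 = 2).card = n₃ := by
    rw [card_filter_sigma, Fin.sum_univ_four]
    simp
    erw [Finset.card_univ, Fintype.card_fin, Finset.card_empty]
    simp
  have c4 : ((univ : Finset (Vx n₁ n₂ n₃ n₄)).filter (sel k n₁ n₂ n₃ n₄)).card = k - 1 := by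
    rw [card_filter_sigma, Fin.sum_univ_four]
    have e0 : ((univ : Finset (Fin (![n₁, n₂, n₃, n₄] 0))).filter
        fun j => sel k n₁ n₂ n₃ n₄ ⟨0, j⟩).card = min (k - 1) n₁ := by
      rw [show ((univ : Finset (Fin (![n₁, n₂, n₃, n₄] 0))).filter
          fun j => sel k n₁ n₂ n₃ n₄ ⟨0, j⟩)
        = ((univ : Finset (Fin n₁)).filter fun j : Fin n₁ => (j : ℕ) < k - 1) from
        Finset.filter_congr fun x _ => by simp [sel]]
      exact card_filter_fin_lt n₁ (k - 1)
    have e1 : ((univ : Finset (Fin (![n₁, n₂, n₃, n₄] 1))).filter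
        fun j => sel k n₁ n₂ n₃ n₄ ⟨1, j⟩).card = min (k - 1 - n₁) n₂ := by
      rw [show ((univ : Finset (Fin (![n₁, n₂, n₃, n₄] 1))).filter
          fun j => sel k n₁ n₂ n₃ n₄ ⟨1, j⟩)
        = ((univ : Finset (Fin n₂)).filter fun j : Fin n₂ => (j : ℕ) + n₁ < k - 1) from
        Finset.filter_congr fun x _ => by simp [sel]]
      exact card_filter_fin_add_lt n₂ n₁ (k - 1)
    have e2 : ((univ : Finset (Fin (![n₁, n₂, n₃, n₄] 2))).filter
        fun j => sel k n₁ n₂ n₃ n₄ ⟨2, j⟩).card = 0 := by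
      simp [sel]
    have e3 : ((univ : Finset (Fin (![n₁, n₂, n₃, n₄] 3))).filter
        fun j => sel k n₁ n₂ n₃ n₄ ⟨3, j⟩).card = 0 := by
      simp [sel]
    rw [e0, e1, e2, e3]
    omega
  have cA : A.card = (n₁ + n₂ + n₃) * n₄ := by
    have hprod : A = (univ.filter fun u : Vx n₁ n₂ n₃ n₄ => u.1 ≠ 3) ×ˢ
        (univ.filter fun v : Vx n₁ n₂ n₃ n₄ => v.1 = 3) := by
      ext p
      simp [memA, Finset.mem_product]
    rw [hprod, Finset.card_product, c1, c2]
  have cB : B.card = n₃ * (k - 1) := by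
    have hprod : B = (univ.filter fun u : Vx n₁ n₂ n₃ n₄ => u.1 = 2) ×ˢ
        (univ.filter (sel k n₁ n₂ n₃ n₄)) := by
      ext p
      simp [memB, Finset.mem_product]
    rw [hprod, Finset.card_product, c3, c4]
  rw [key, Set.ncard_coe_finset, Finset.card_image_of_injOn injAB,
    Finset.card_union_of_disjoint hdisj, cA, cB, Nat.mul_comm n₃ (k - 1)]

end TuranKL

/-- For all integers `k, n₁, n₂, n₃, n₄` with `2 ≤ k ≤ n₁ + n₂`, the complete 4-partite
graph `K_{n₁,n₂,n₃,n₄}` has a subgraph with `(n₁+n₂+n₃)n₄ + (k-1)n₃` edges containing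
no `k` pairwise vertex-disjoint triangles. -/
theorem turan_K4partite_general_lower_bound (k n₁ n₂ n₃ n₄ : ℕ)
    (hk : 2 ≤ k) (hkn : k ≤ n₁ + n₂) :
    ∃ H : SimpleGraph (Σ i : Fin 4, Fin (![n₁, n₂, n₃, n₄] i)),
      H ≤ SimpleGraph.completeMultipartiteGraph (fun i : Fin 4 => Fin (![n₁, n₂, n₃, n₄] i)) ∧
      H.edgeSet.ncard = (n₁ + n₂ + n₃) * n₄ + (k - 1) * n₃ ∧
      ¬ HasKDisjointTriangles H k := by
  refine ⟨TuranKL.Hg k n₁ n₂ n₃ n₄, ?_, TuranKL.card_edges k n₁ n₂ n₃ n₄ hk hkn,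
    TuranKL.no_k_triangles k n₁ n₂ n₃ n₄ hk⟩
  intro u v h
  exact h.1
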